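/- Suppose ψ > 0 and the true value is θ* = 0. Let θ̂_r^{(n)} | θ* ~ N(0, σ²/n). Then BF_{SM:A}(θ̂_r^{(n)}; ψ, h) = ψ BF_R^{(n)} + (1−ψ) BF_{S:A}(θ̂_r^{(n)}; h) converges to ∞ in probability as n → ∞, since BF_R^{(n)} → ∞ in probability and BF_{S:A}(θ̂_r^{(n)}; h) converges in probability to a finite constant. -/

import Mathlib

open MeasureTheory ProbabilityTheory Filter Real Topology

noncomputable def nd (x μ τ2 : ℝ) : ℝ :=
  (Real.sqrt (2 * Real.pi * τ2))⁻¹ * Real.exp (-(x - μ) ^ 2 / (2 * τ2))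

noncomputable def G1 (u : ℝ) : ℝ :=
  ((gaussianReal 0 1) {x | x ^ 2 ≤ u}).toReal

lemma nd_nonneg (x μ τ2 : ℝ) : 0 ≤ nd x μ τ2 := by
  unfold nd
  have h1 : 0 ≤ Real.sqrt (2 * Real.pi * τ2) := Real.sqrt_nonneg _
  positivity

lemma nd_pos (x μ : ℝ) {τ2 : ℝ} (hτ : 0 < τ2) : 0 < nd x μ τ2 := by
  unfold nd
  have h1 : 0 < Real.sqrt (2 * Real.pi * τ2) :=
    Real.sqrt_pos.2 (by positivity)
  positivity

lemma nd_le (x μ : ℝ) {s τ2 : ℝ} (hs : 0 < s) (hst : s ≤ τ2) :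
    nd x μ τ2 ≤ (Real.sqrt (2 * Real.pi * s))⁻¹ := by
  have hτ : 0 < τ2 := lt_of_lt_of_le hs hst
  have h1 : Real.exp (-(x - μ) ^ 2 / (2 * τ2)) ≤ 1 := by
    rw [Real.exp_le_one_iff]
    apply div_nonpos_of_nonpos_of_nonneg
    · nlinarith [sq_nonneg (x - μ)]
    · positivity
  have h2 : 0 < Real.sqrt (2 * Real.pi * s) := Real.sqrt_pos.2 (by positivity)
  calc nd x μ τ2 ≤ (Real.sqrt (2 * Real.pi * τ2))⁻¹ * 1 :=
        mul_le_mul_of_nonneg_left h1 (inv_nonneg.2 (Real.sqrt_nonneg _))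
    _ = (Real.sqrt (2 * Real.pi * τ2))⁻¹ := mul_one _
    _ ≤ (Real.sqrt (2 * Real.pi * s))⁻¹ := by
        apply inv_anti₀ h2
        apply Real.sqrt_le_sqrt
        nlinarith [Real.pi_pos]

lemma nd_ge (x : ℝ) {v K : ℝ} (hv : 0 < v) (hK : 0 ≤ K) (hx : x ^ 2 ≤ K * v) :
    (Real.sqrt (2 * Real.pi * v))⁻¹ * Real.exp (-K / 2) ≤ nd x 0 v := by
  unfold nd
  apply mul_le_mul_of_nonneg_left _ (inv_nonneg.2 (Real.sqrt_nonneg _))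
  apply Real.exp_le_exp.2
  rw [sub_zero, div_le_div_iff₀ (by norm_num) (by positivity)]
  nlinarith

theorem stmt10 (θo σo h ψ : ℝ) (σ2 : NNReal) (hθo : θo ≠ 0) (hσo : 0 < σo) (hh : 0 < h)
    (hψ : 0 < ψ) (hψ1 : ψ ≤ 1) (hσ2 : 0 < σ2) :
    ∀ M : ℝ, Tendsto (fun n : ℕ =>
        (gaussianReal 0 (σ2 / n)) {x |
          ψ * (nd x 0 ((σ2 : ℝ) / n) / nd x θo (σo ^ 2 + (σ2 : ℝ) / n))
            + (1 - ψ) * (nd x 0 (h * σo ^ 2 + (σ2 : ℝ) / n) /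
                nd x θo (σo ^ 2 + (σ2 : ℝ) / n)) ≤ M})
      atTop (𝓝 0) := by
  intro M
  rw [ENNReal.tendsto_nhds_zero]
  intro ε hε
  -- Tail bound for the standard Gaussian
  have htail : Tendsto (fun K : ℕ => (gaussianReal 0 1) {x : ℝ | (K : ℝ) < x ^ 2})
      atTop (𝓝 0) := by
    have h0 : (⋂ K : ℕ, {x : ℝ | (K : ℝ) < x ^ 2}) = ∅ := by
      ext x
      simp only [Set.mem_iInter, Set.mem_setOf_eq, Set.mem_empty_iff_false, iff_false,
        not_forall, not_lt]
      obtain ⟨K, hKx⟩ := exists_nat_ge (x ^ 2)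
      exact ⟨K, hKx⟩
    have ht := tendsto_measure_iInter_atTop (μ := gaussianReal 0 1)
      (s := fun K : ℕ => {x : ℝ | (K : ℝ) < x ^ 2})
      (fun K => (measurableSet_lt measurable_const (measurable_id.pow_const 2)).nullMeasurableSet)
      (fun i j hij => Set.setOf_subset_setOf.mpr fun x hx => lt_of_le_of_lt (Nat.cast_le.mpr hij) hx)
      ⟨0, measure_ne_top _ _⟩
    rwa [h0, measure_empty] at ht
  obtain ⟨K, hK⟩ := (ENNReal.tendsto_nhds_zero.mp htail ε hε).exists
  -- the lower bound on the first Bayes factor tends to infinity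
  have hc : (0 : ℝ) < ψ * (Real.sqrt (2 * Real.pi * σo ^ 2) * Real.exp (-(K : ℝ) / 2)) := by
    have := Real.pi_pos
    positivity
  have hv0 : Tendsto (fun n : ℕ => (σ2 : ℝ) / n) atTop (𝓝 0) :=
    tendsto_const_div_atTop_nhds_zero_nat _
  have hsq : Tendsto (fun n : ℕ => Real.sqrt (2 * Real.pi * ((σ2 : ℝ) / n))) atTop (𝓝[>] 0) := by
    rw [tendsto_nhdsWithin_iff]
    constructor
    · have : Continuous fun y : ℝ => Real.sqrt (2 * Real.pi * y) :=
        Real.continuous_sqrt.comp (continuous_const.mul continuous_id)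
      have := (this.tendsto 0).comp hv0
      simpa [Function.comp_def] using this
    · filter_upwards [eventually_ge_atTop 1] with n hn
      have hn0 : (0 : ℝ) < n := by exact_mod_cast Nat.pos_of_ne_zero (by omega)
      have : (0 : ℝ) < (σ2 : ℝ) / n := by positivity
      exact Real.sqrt_pos.2 (by positivity)
  have hTend : Tendsto (fun n : ℕ => ψ * (Real.sqrt (2 * Real.pi * σo ^ 2) *
      Real.exp (-(K : ℝ) / 2)) * (Real.sqrt (2 * Real.pi * ((σ2 : ℝ) / n)))⁻¹) atTop atTop :=
    (hsq.inv_tendsto_nhdsGT_zero).const_mul_atTop hc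
  filter_upwards [eventually_ge_atTop 1, hTend.eventually_gt_atTop M] with n hn1 hnM
  have hn0 : (0 : ℝ) < n := by exact_mod_cast Nat.pos_of_ne_zero (by omega)
  set v : ℝ := (σ2 : ℝ) / n with hv_def
  have hv : 0 < v := by positivity
  -- inclusion of events
  have hsub : {x : ℝ |
      ψ * (nd x 0 ((σ2 : ℝ) / n) / nd x θo (σo ^ 2 + (σ2 : ℝ) / n))
        + (1 - ψ) * (nd x 0 (h * σo ^ 2 + (σ2 : ℝ) / n) /
            nd x θo (σo ^ 2 + (σ2 : ℝ) / n)) ≤ M} ⊆ {x : ℝ | (K : ℝ) * v < x ^ 2} := by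
    intro x hx
    simp only [Set.mem_setOf_eq] at hx ⊢
    by_contra h2
    push_neg at h2
    have hσo2 : (0 : ℝ) < σo ^ 2 := by positivity
    have hR1 : ((Real.sqrt (2 * Real.pi * v))⁻¹ * Real.exp (-(K : ℝ) / 2)) /
        (Real.sqrt (2 * Real.pi * σo ^ 2))⁻¹ ≤ nd x 0 v / nd x θo (σo ^ 2 + v) :=
      div_le_div₀ (nd_nonneg _ _ _) (nd_ge x hv (by positivity) h2)
        (nd_pos _ _ (by positivity)) (nd_le _ _ hσo2 (by linarith))
    have heq : ψ * (((Real.sqrt (2 * Real.pi * v))⁻¹ * Real.exp (-(K : ℝ) / 2)) /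
        (Real.sqrt (2 * Real.pi * σo ^ 2))⁻¹) =
        ψ * (Real.sqrt (2 * Real.pi * σo ^ 2) * Real.exp (-(K : ℝ) / 2)) *
          (Real.sqrt (2 * Real.pi * v))⁻¹ := by
      rw [div_eq_mul_inv, inv_inv]; ring
    have hψR1 : ψ * (((Real.sqrt (2 * Real.pi * v))⁻¹ * Real.exp (-(K : ℝ) / 2)) /
        (Real.sqrt (2 * Real.pi * σo ^ 2))⁻¹) ≤
        ψ * (nd x 0 v / nd x θo (σo ^ 2 + v)) :=
      mul_le_mul_of_nonneg_left hR1 hψ.le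
    have hR2 : 0 ≤ (1 - ψ) * (nd x 0 (h * σo ^ 2 + v) / nd x θo (σo ^ 2 + v)) :=
      mul_nonneg (by linarith) (div_nonneg (nd_nonneg _ _ _) (nd_nonneg _ _ _))
    rw [heq] at hψR1
    rw [← hv_def] at hx
    linarith
  refine le_trans (measure_mono hsub) ?_
  -- compute the measure of the tail event by scaling
  have hmap2 : gaussianReal (0 : ℝ) (σ2 / (n : NNReal)) =
      (gaussianReal 0 1).map (fun x => Real.sqrt v * x) := by
    have := gaussianReal_map_const_mul (μ := 0) (v := 1) (Real.sqrt v)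
    rw [this]
    congr 1
    · simp
    · apply NNReal.coe_injective
      push_cast
      rw [Real.sq_sqrt hv.le, mul_one, hv_def]
  have hTmeas : MeasurableSet {x : ℝ | (K : ℝ) * v < x ^ 2} :=
    measurableSet_lt measurable_const (measurable_id.pow_const 2)
  have hpre : (fun x => Real.sqrt v * x) ⁻¹' {x : ℝ | (K : ℝ) * v < x ^ 2} =
      {x : ℝ | (K : ℝ) < x ^ 2} := by
    ext y
    simp only [Set.mem_preimage, Set.mem_setOf_eq, mul_pow, Real.sq_sqrt hv.le]
    rw [mul_comm (K : ℝ) v]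
    exact mul_lt_mul_iff_right₀ hv
  calc (gaussianReal 0 (σ2 / (n : NNReal))) {x : ℝ | (K : ℝ) * v < x ^ 2}
      = (gaussianReal 0 1) {x : ℝ | (K : ℝ) < x ^ 2} := by
        rw [hmap2, Measure.map_apply (measurable_const_mul _) hTmeas, hpre]
    _ ≤ ε := hK
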